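/- Let d ≥ 1, let α : (0,∞) → ℝ be twice continuously differentiable with α(ρ) > 0 for all ρ > 0 and with ρ ↦ 1/α(ρ) concave on (0,∞), and let ε : (0,∞) × ℝ → ℝ be a twice continuously differentiable convex function of (v, η). Then the total volumetric energy E(ρ, m, s, j) = ‖m‖²/(2ρ) + ρ·ε(1/ρ, s/ρ) + (α(ρ)/2)·‖j‖² is a convex function of Q = (ρ, m, s, j) on (0,∞) × ℝ^d × ℝ × ℝ^d. -/

import Mathlib

private lemma aux_pos {a b x y : ℝ} (ha : 0 ≤ a) (hb : 0 ≤ b) (hab : a + b = 1)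
    (hx : 0 < x) (hy : 0 < y) : 0 < a * x + b * y := by
  rcases ha.eq_or_lt with h | h
  · have hb1 : b = 1 := by linarith
    rw [← h, hb1]; simpa using hy
  · have h1 : 0 < a * x := mul_pos h hx
    have h2 : 0 ≤ b * y := mul_nonneg hb hy.le
    linarith

private lemma quadlin {a b x y β γ : ℝ} (ha : 0 ≤ a) (hb : 0 ≤ b)
    (hβ : 0 < β) (hγ : 0 < γ) (hD : 0 < a * β + b * γ) :
    (a * x + b * y) ^ 2 / (2 * (a * β + b * γ)) ≤ a * (x ^ 2 / (2 * β)) + b * (y ^ 2 / (2 * γ)) := by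
  have hrhs : a * (x ^ 2 / (2 * β)) + b * (y ^ 2 / (2 * γ))
      = (a * x ^ 2 * γ + b * y ^ 2 * β) / (2 * (β * γ)) := by
    field_simp
  rw [hrhs, div_le_div_iff₀ (by positivity) (by positivity)]
  nlinarith [mul_nonneg (mul_nonneg ha hb) (sq_nonneg (x * γ - y * β))]

private lemma persp (ε : ℝ × ℝ → ℝ) (hεconv : ConvexOn ℝ (Set.Ioi 0 ×ˢ Set.univ) ε)
    {a b ρ ρ' s s' : ℝ} (ha : 0 ≤ a) (hb : 0 ≤ b) (hab : a + b = 1)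
    (hρ : 0 < ρ) (hρ' : 0 < ρ') :
    (a * ρ + b * ρ') * ε (1 / (a * ρ + b * ρ'), (a * s + b * s') / (a * ρ + b * ρ'))
      ≤ a * (ρ * ε (1 / ρ, s / ρ)) + b * (ρ' * ε (1 / ρ', s' / ρ')) := by
  have hr : 0 < a * ρ + b * ρ' := aux_pos ha hb hab hρ hρ'
  set r := a * ρ + b * ρ' with hrdef
  have hc : (0:ℝ) ≤ a * ρ / r := by positivity
  have hd : (0:ℝ) ≤ b * ρ' / r := by positivity
  have hcd : a * ρ / r + b * ρ' / r = 1 := by field_simp; exact hrdef.symm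
  have hp : ((1:ℝ) / ρ, s / ρ) ∈ Set.Ioi (0:ℝ) ×ˢ (Set.univ : Set ℝ) :=
    ⟨by simpa using one_div_pos.mpr hρ, trivial⟩
  have hq : ((1:ℝ) / ρ', s' / ρ') ∈ Set.Ioi (0:ℝ) ×ˢ (Set.univ : Set ℝ) :=
    ⟨by simpa using one_div_pos.mpr hρ', trivial⟩
  have key := hεconv.2 hp hq hc hd hcd
  have hpt : (a * ρ / r) • ((1:ℝ) / ρ, s / ρ) + (b * ρ' / r) • ((1:ℝ) / ρ', s' / ρ')
      = (1 / r, (a * s + b * s') / r) := by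
    simp only [Prod.smul_mk, Prod.mk_add_mk, smul_eq_mul, Prod.mk.injEq]
    constructor
    · field_simp
      linear_combination hab
    · field_simp
  rw [hpt] at key
  have := mul_le_mul_of_nonneg_left key hr.le
  calc r * ε (1 / r, (a * s + b * s') / r)
      ≤ r * (a * ρ / r * ε (1 / ρ, s / ρ) + b * ρ' / r * ε (1 / ρ', s' / ρ')) := this
    _ = a * (ρ * ε (1 / ρ, s / ρ)) + b * (ρ' * ε (1 / ρ', s' / ρ')) := by
        field_simp

theorem stmt_4 (d : ℕ) (hd : 1 ≤ d) (α : ℝ → ℝ) (ε : ℝ × ℝ → ℝ)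
    (hα : ContDiffOn ℝ 2 α (Set.Ioi 0))
    (hαpos : ∀ ρ ∈ Set.Ioi (0 : ℝ), 0 < α ρ)
    (hconc : ConcaveOn ℝ (Set.Ioi 0) (fun ρ => 1 / α ρ))
    (hε : ContDiffOn ℝ 2 ε (Set.Ioi 0 ×ˢ Set.univ))
    (hεconv : ConvexOn ℝ (Set.Ioi 0 ×ˢ Set.univ) ε) :
    ConvexOn ℝ {Q : ℝ × EuclideanSpace ℝ (Fin d) × ℝ × EuclideanSpace ℝ (Fin d) | 0 < Q.1}
      (fun Q => ‖Q.2.1‖ ^ 2 / (2 * Q.1) + Q.1 * ε (1 / Q.1, Q.2.2.1 / Q.1)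
        + (α Q.1 / 2) * ‖Q.2.2.2‖ ^ 2) := by
  constructor
  · intro x hx y hy a b ha hb hab
    simp only [Set.mem_setOf_eq] at *
    simpa using aux_pos ha hb hab hx hy
  · intro x hx y hy a b ha hb hab
    simp only [Set.mem_setOf_eq] at hx hy
    obtain ⟨ρ, m, s, j⟩ := x
    obtain ⟨ρ', m', s', j'⟩ := y
    simp only at hx hy
    have hr : 0 < a * ρ + b * ρ' := aux_pos ha hb hab hx hy
    simp only [Prod.smul_mk, Prod.mk_add_mk, smul_eq_mul]
    -- Term 1
    have hm : ‖a • m + b • m'‖ ≤ a * ‖m‖ + b * ‖m'‖ := by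
      calc ‖a • m + b • m'‖ ≤ ‖a • m‖ + ‖b • m'‖ := norm_add_le _ _
        _ = a * ‖m‖ + b * ‖m'‖ := by
            rw [norm_smul, norm_smul, Real.norm_eq_abs, Real.norm_eq_abs,
              abs_of_nonneg ha, abs_of_nonneg hb]
    have t1 : ‖a • m + b • m'‖ ^ 2 / (2 * (a * ρ + b * ρ'))
        ≤ a * (‖m‖ ^ 2 / (2 * ρ)) + b * (‖m'‖ ^ 2 / (2 * ρ')) := by
      have h1 : ‖a • m + b • m'‖ ^ 2 ≤ (a * ‖m‖ + b * ‖m'‖) ^ 2 :=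
        pow_le_pow_left₀ (norm_nonneg _) hm 2
      calc ‖a • m + b • m'‖ ^ 2 / (2 * (a * ρ + b * ρ'))
          ≤ (a * ‖m‖ + b * ‖m'‖) ^ 2 / (2 * (a * ρ + b * ρ')) := by
            exact div_le_div_of_nonneg_right h1 (by positivity)
        _ ≤ a * (‖m‖ ^ 2 / (2 * ρ)) + b * (‖m'‖ ^ 2 / (2 * ρ')) :=
            quadlin ha hb hx hy hr
    -- Term 2
    have t2 := persp ε hεconv (a := a) (b := b) (s := s) (s' := s') ha hb hab hx hy
    -- Term 3
    have hαρ := hαpos ρ hx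
    have hαρ' := hαpos ρ' hy
    have hαr := hαpos _ hr
    have hβ : 0 < 1 / α ρ := by positivity
    have hβ' : 0 < 1 / α ρ' := by positivity
    have hD : 0 < a * (1 / α ρ) + b * (1 / α ρ') := aux_pos ha hb hab hβ hβ'
    have hconc' : a * (1 / α ρ) + b * (1 / α ρ') ≤ 1 / α (a * ρ + b * ρ') := by
      have := hconc.2 hx hy ha hb hab
      simpa using this
    have hj : ‖a • j + b • j'‖ ≤ a * ‖j‖ + b * ‖j'‖ := by
      calc ‖a • j + b • j'‖ ≤ ‖a • j‖ + ‖b • j'‖ := norm_add_le _ _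
        _ = a * ‖j‖ + b * ‖j'‖ := by
            rw [norm_smul, norm_smul, Real.norm_eq_abs, Real.norm_eq_abs,
              abs_of_nonneg ha, abs_of_nonneg hb]
    have t3 : (α (a * ρ + b * ρ') / 2) * ‖a • j + b • j'‖ ^ 2
        ≤ a * ((α ρ / 2) * ‖j‖ ^ 2) + b * ((α ρ' / 2) * ‖j'‖ ^ 2) := by
      have e1 : (α (a * ρ + b * ρ') / 2) * ‖a • j + b • j'‖ ^ 2
          = ‖a • j + b • j'‖ ^ 2 / (2 * (1 / α (a * ρ + b * ρ'))) := by
        field_simp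
      have e2 : a * ((α ρ / 2) * ‖j‖ ^ 2) = a * (‖j‖ ^ 2 / (2 * (1 / α ρ))) := by
        have hne : α ρ ≠ 0 := ne_of_gt hαρ
        congr 1
        field_simp
      have e3 : b * ((α ρ' / 2) * ‖j'‖ ^ 2) = b * (‖j'‖ ^ 2 / (2 * (1 / α ρ'))) := by
        have hne : α ρ' ≠ 0 := ne_of_gt hαρ'
        congr 1
        field_simp
      rw [e1, e2, e3]
      have step1 : ‖a • j + b • j'‖ ^ 2 / (2 * (1 / α (a * ρ + b * ρ')))
          ≤ ‖a • j + b • j'‖ ^ 2 / (2 * (a * (1 / α ρ) + b * (1 / α ρ'))) := by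
        apply div_le_div_of_nonneg_left (by positivity) (by positivity)
        linarith
      have h1 : ‖a • j + b • j'‖ ^ 2 ≤ (a * ‖j‖ + b * ‖j'‖) ^ 2 :=
        pow_le_pow_left₀ (norm_nonneg _) hj 2
      calc ‖a • j + b • j'‖ ^ 2 / (2 * (1 / α (a * ρ + b * ρ')))
          ≤ ‖a • j + b • j'‖ ^ 2 / (2 * (a * (1 / α ρ) + b * (1 / α ρ'))) := step1
        _ ≤ (a * ‖j‖ + b * ‖j'‖) ^ 2 / (2 * (a * (1 / α ρ) + b * (1 / α ρ'))) := by
            exact div_le_div_of_nonneg_right h1 (by positivity)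
        _ ≤ a * (‖j‖ ^ 2 / (2 * (1 / α ρ))) + b * (‖j'‖ ^ 2 / (2 * (1 / α ρ'))) :=
            quadlin ha hb hβ hβ' hD
    calc ‖a • m + b • m'‖ ^ 2 / (2 * (a * ρ + b * ρ'))
          + (a * ρ + b * ρ') * ε (1 / (a * ρ + b * ρ'), (a * s + b * s') / (a * ρ + b * ρ'))
          + (α (a * ρ + b * ρ') / 2) * ‖a • j + b • j'‖ ^ 2
        ≤ (a * (‖m‖ ^ 2 / (2 * ρ)) + b * (‖m'‖ ^ 2 / (2 * ρ')))
          + (a * (ρ * ε (1 / ρ, s / ρ)) + b * (ρ' * ε (1 / ρ', s' / ρ')))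
          + (a * ((α ρ / 2) * ‖j‖ ^ 2) + b * ((α ρ' / 2) * ‖j'‖ ^ 2)) := by
          exact add_le_add (add_le_add t1 t2) t3
      _ = a * (‖m‖ ^ 2 / (2 * ρ) + ρ * ε (1 / ρ, s / ρ) + (α ρ / 2) * ‖j‖ ^ 2)
          + b * (‖m'‖ ^ 2 / (2 * ρ') + ρ' * ε (1 / ρ', s' / ρ') + (α ρ' / 2) * ‖j'‖ ^ 2) := by
          ring
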